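/- Let G be a finite connected undirected graph with nonnegative real edge weights whose vertex set is partitioned into pairwise disjoint nonempty clusters C_1,…,C_k, each inducing a connected subgraph G[C_i]. For each i let T_i be a minimum spanning tree of G[C_i], and let F be a set of inter-cluster edges of G whose image under cluster-contraction is a minimum-weight spanning tree of the weighted cluster-contraction graph G'. Then the subgraph T̃ of G with edge set F ∪ E(T_1) ∪ … ∪ E(T_k) is a clustered spanning tree of G, and w(T̃) ≤ w(T) for every clustered spanning tree T of G. -/

import Mathlib

open SimpleGraph

/-- The clusters `C i` form a partition of the vertex set:
they are nonempty, pairwise disjoint, and cover every vertex. -/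
def IsPartition {V : Type*} {k : ℕ} (C : Fin k → Set V) : Prop :=
  (∀ i, (C i).Nonempty) ∧ (Pairwise fun i j => Disjoint (C i) (C j)) ∧
    (⋃ i, C i) = Set.univ

/-- `T` is a clustered spanning tree of `G`: a spanning tree such that each
cluster induces a connected subgraph (a subtree) of `T`. -/
def IsClusteredSpanningTree {V : Type*} {k : ℕ} (G : SimpleGraph V) (C : Fin k → Set V)
    (T : SimpleGraph V) : Prop :=
  T ≤ G ∧ T.IsTree ∧ ∀ i, (T.induce (C i)).Connected

/-- The cluster-contraction of a graph: vertices are the cluster indices, with an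
edge between two distinct clusters iff some edge of `G` joins them. -/
def contractClusters {V : Type*} {k : ℕ} (G : SimpleGraph V) (C : Fin k → Set V) :
    SimpleGraph (Fin k) where
  Adj i j := i ≠ j ∧ ∃ u ∈ C i, ∃ v ∈ C j, G.Adj u v
  symm := by
    constructor
    rintro i j ⟨hij, u, hu, v, hv, huv⟩
    exact ⟨hij.symm, v, hv, u, hu, huv.symm⟩
  loopless := by constructor; rintro i ⟨hii, -⟩; exact hii rfl

/-- The (unordered) edge `e` joins the vertex sets `A` and `B`. -/
def Crosses {V : Type*} (e : Sym2 V) (A B : Set V) : Prop :=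
  ∃ a ∈ A, ∃ b ∈ B, e = s(a, b)

/-- The weight of an edge of the cluster-contraction graph: the minimum weight of a
`G`-edge joining the two clusters. -/
noncomputable def contractWeight {V : Type*} {k : ℕ} (G : SimpleGraph V)
    (w : Sym2 V → ℝ) (C : Fin k → Set V) : Sym2 (Fin k) → ℝ :=
  Sym2.lift ⟨fun i j => sInf {x | ∃ u v, G.Adj u v ∧
      ((u ∈ C i ∧ v ∈ C j) ∨ (u ∈ C j ∧ v ∈ C i)) ∧ x = w s(u, v)},
    by
      intro i j
      apply congrArg sInf
      apply Set.ext
      intro x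
      constructor <;> rintro ⟨u, v, h1, h2, h3⟩ <;> exact ⟨u, v, h1, h2.symm, h3⟩⟩

/-- The total weight of the edges of a graph. -/
noncomputable def wsum {V : Type*} (H : SimpleGraph V) (w : Sym2 V → ℝ) : ℝ :=
  ∑ᶠ e ∈ H.edgeSet, w e

section helpers
variable {V : Type*}

lemma conn_delete {G : SimpleGraph V} {v w : V} (hG : G.Connected)
    (h : (G \ fromEdgeSet {s(v, w)}).Reachable v w) :
    (G \ fromEdgeSet {s(v, w)}).Connected := by
  have key : ∀ {a b : V}, G.Walk a b → (G \ fromEdgeSet {s(v, w)}).Reachable a b := by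
    intro a b p
    induction p with
    | nil => exact Reachable.refl _
    | @cons x y z h' p ih =>
      refine Reachable.trans ?_ ih
      by_cases he : s(x, y) = s(v, w)
      · rw [Sym2.eq_iff] at he
        rcases he with ⟨rfl, rfl⟩ | ⟨rfl, rfl⟩
        · exact h
        · exact h.symm
      · exact Adj.reachable ⟨h', by simp [fromEdgeSet_adj, he]⟩
  have hne : Nonempty V := hG.nonempty
  exact ⟨fun a b => (hG a b).elim fun p => key p⟩

lemma exists_spanning_tree [Fintype V] :
    ∀ (n : ℕ) (G : SimpleGraph V), G.edgeSet.ncard ≤ n → G.Connected → ∃ H ≤ G, H.IsTree := by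
  intro n
  induction n with
  | zero =>
    intro G hcard hconn
    refine ⟨G, le_rfl, hconn, ?_⟩
    intro v c hc
    have : c.edges ≠ [] := by
      have h3 := hc.three_le_length
      intro h
      rw [← Walk.length_edges, h] at h3
      simp at h3
    obtain ⟨e, he⟩ := List.exists_mem_of_ne_nil _ this
    have heG : e ∈ G.edgeSet := c.edges_subset_edgeSet he
    have : G.edgeSet = ∅ := by
      have hfin : G.edgeSet.Finite := Set.toFinite _
      rw [← Set.ncard_eq_zero hfin]
      omega
    rw [this] at heG; exact heG
  | succ n ih =>
    intro G hcard hconn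
    by_cases hac : G.IsAcyclic
    · exact ⟨G, le_rfl, hconn, hac⟩
    · rw [IsAcyclic] at hac; push_neg at hac
      obtain ⟨v, c, hc⟩ := hac
      have hne : c.edges ≠ [] := by
        have h3 := hc.three_le_length
        intro h
        rw [← Walk.length_edges, h] at h3
        simp at h3
      obtain ⟨e, he⟩ := List.exists_mem_of_ne_nil _ hne
      obtain ⟨x, y⟩ := e
      have hxy : G.Adj x y ∧ (G \ fromEdgeSet {s(x, y)}).Reachable x y :=
        adj_and_reachable_delete_edges_iff_exists_cycle.mpr ⟨v, c, hc, he⟩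
      have hconn' : (G \ fromEdgeSet {s(x, y)}).Connected := conn_delete hconn hxy.2
      have hE : (G \ fromEdgeSet {s(x, y)}).edgeSet = G.edgeSet \ {s(x, y)} := by
        rw [edgeSet_sdiff, edgeSet_fromEdgeSet]
        ext f
        simp only [Set.mem_diff, Set.mem_singleton_iff, Set.mem_setOf_eq, not_and, not_not]
        constructor
        · rintro ⟨hf, hf2⟩
          exact ⟨hf, fun hfe => (G.not_isDiag_of_mem_edgeSet hf) (hf2 hfe)⟩
        · rintro ⟨hf, hf2⟩
          exact ⟨hf, fun hh => absurd hh hf2⟩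
      have hmem : s(x, y) ∈ G.edgeSet := hxy.1
      have hlt : (G \ fromEdgeSet {s(x, y)}).edgeSet.ncard ≤ n := by
        rw [hE]
        have := Set.ncard_diff_singleton_add_one hmem (Set.toFinite _)
        omega
      obtain ⟨H, hH, ht⟩ := ih _ hlt hconn'
      exact ⟨H, hH.trans sdiff_le, ht⟩

lemma tree_ncard [Fintype V] {G : SimpleGraph V} (h : G.IsTree) :
    G.edgeSet.ncard + 1 = Fintype.card V := by
  classical
  have inst : Fintype G.edgeSet := (Set.toFinite _).fintype
  rw [Set.ncard_eq_toFinset_card' G.edgeSet]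
  have := h.card_edgeFinset
  rwa [edgeFinset] at this

lemma isTree_of_connected_of_ncard [Fintype V] {G : SimpleGraph V}
    (hconn : G.Connected) (hcard : G.edgeSet.ncard + 1 ≤ Fintype.card V) : G.IsTree := by
  obtain ⟨H, hle, hH⟩ := exists_spanning_tree G.edgeSet.ncard G le_rfl hconn
  have h1 := tree_ncard hH
  have hsub := edgeSet_mono hle
  have heq : H.edgeSet = G.edgeSet :=
    Set.eq_of_subset_of_ncard_le hsub (by omega) (Set.toFinite _)
  rwa [← edgeSet_inj.mp heq]

lemma isAcyclic_induce {G : SimpleGraph V} (h : G.IsAcyclic) (s : Set V) :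
    (G.induce s).IsAcyclic := by
  intro v c hc
  let f : G.induce s ↪g G := Embedding.induce s
  exact h (c.map f.toHom) (hc.map f.injective)

lemma ncard_iUnion_fin {α : Type*} {k : ℕ} (s : Fin k → Set α) (hfin : ∀ i, (s i).Finite)
    (hdisj : Pairwise (Function.onFun Disjoint s)) :
    (⋃ i, s i).ncard = ∑ i, (s i).ncard := by
  classical
  have h1 : (⋃ i, s i) = ↑(Finset.univ.biUnion fun i => (hfin i).toFinset) := by
    ext a; simp
  rw [h1, Set.ncard_coe_finset, Finset.card_biUnion]
  · exact Finset.sum_congr rfl fun i _ => (Set.ncard_eq_toFinset_card _ (hfin i)).symm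
  · intro i _ j _ hij
    simpa [Finset.disjoint_left, Set.Finite.mem_toFinset] using
      Set.disjoint_left.mp (hdisj hij)

end helpers

theorem stmt17 {V : Type*} [Fintype V] (G : SimpleGraph V) (hG : G.Connected)
    (w : Sym2 V → ℝ) (hw : ∀ e, 0 ≤ w e)
    {k : ℕ} (C : Fin k → Set V) (hpart : IsPartition C)
    (hconn : ∀ i, (G.induce (C i)).Connected)
    -- `Ti i` is a minimum spanning tree of `G[C i]` (viewed as a graph on `V`
    -- whose edges all lie inside `C i`):
    (Ti : Fin k → SimpleGraph V)
    (hTi : ∀ i, Ti i ≤ G ∧ (∀ u v, (Ti i).Adj u v → u ∈ C i ∧ v ∈ C i) ∧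
      ((Ti i).induce (C i)).IsTree)
    (hTiMin : ∀ i, ∀ T' : SimpleGraph V, T' ≤ G →
      (∀ u v, T'.Adj u v → u ∈ C i ∧ v ∈ C i) → (T'.induce (C i)).IsTree →
      wsum (Ti i) w ≤ wsum T' w)
    -- `T'` is a minimum-weight spanning tree of the weighted cluster-contraction graph:
    (T' : SimpleGraph (Fin k)) (hT'le : T' ≤ contractClusters G C) (hT'tree : T'.IsTree)
    (hT'min : ∀ H : SimpleGraph (Fin k), H ≤ contractClusters G C → H.IsTree →
      (∑ᶠ e ∈ T'.edgeSet, contractWeight G w C e) ≤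
        ∑ᶠ e ∈ H.edgeSet, contractWeight G w C e)
    -- `F` consists of, for each edge `{i, j}` of `T'`, exactly one minimum-weight
    -- `G`-edge joining `C i` and `C j`, and nothing else:
    (F : Set (Sym2 V))
    (hF1 : ∀ e ∈ F, e ∈ G.edgeSet)
    (hF2 : ∀ i j, T'.Adj i j → ∃! e, e ∈ F ∧ Crosses e (C i) (C j))
    (hF3 : ∀ e ∈ F, ∀ i j, i ≠ j → Crosses e (C i) (C j) → T'.Adj i j ∧
      IsLeast {x | ∃ e' ∈ G.edgeSet, Crosses e' (C i) (C j) ∧ x = w e'} (w e))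
    (hF4 : ∀ e ∈ F, ∃ i j, T'.Adj i j ∧ Crosses e (C i) (C j)) :
    IsClusteredSpanningTree G C (SimpleGraph.fromEdgeSet (F ∪ ⋃ i, (Ti i).edgeSet)) ∧
      ∀ T : SimpleGraph V, IsClusteredSpanningTree G C T →
        wsum (SimpleGraph.fromEdgeSet (F ∪ ⋃ i, (Ti i).edgeSet)) w ≤ wsum T w := by
  classical
  obtain ⟨hCne, hdisj, hcover⟩ := hpart
  have hclex : ∀ v : V, ∃ i, v ∈ C i := by
    intro v
    have hv : v ∈ ⋃ i, C i := by rw [hcover]; trivial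
    simpa using hv
  let cl : V → Fin k := fun v => (hclex v).choose
  have hclmem : ∀ v, v ∈ C (cl v) := fun v => (hclex v).choose_spec
  have hcleq : ∀ {v : V} {i : Fin k}, v ∈ C i → cl v = i := by
    intro v i hv
    by_contra hne'
    exact Set.disjoint_left.mp (hdisj hne') (hclmem v) hv
  set S : Set (Sym2 V) := F ∪ ⋃ i, (Ti i).edgeSet with hS_def
  have hSG : S ⊆ G.edgeSet := by
    rintro e (heF | heU)
    · exact hF1 e heF
    · obtain ⟨i, hei⟩ := Set.mem_iUnion.mp heU
      exact edgeSet_mono (hTi i).1 hei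
  have hTtle : SimpleGraph.fromEdgeSet S ≤ G := by
    intro a b hab
    rw [fromEdgeSet_adj] at hab
    exact (mem_edgeSet _).mp (hSG hab.1)
  have hTtE : (SimpleGraph.fromEdgeSet S).edgeSet = S := by
    rw [edgeSet_fromEdgeSet]
    ext e
    exact ⟨fun h => h.1, fun h => ⟨h, G.not_isDiag_of_mem_edgeSet (hSG h)⟩⟩
  have hFcl : ∀ e ∈ F, ∀ a b : V, e = s(a, b) → T'.Adj (cl a) (cl b) := by
    intro e heF a b hab
    obtain ⟨i, j, hadj, a₀, ha₀, b₀, hb₀, he⟩ := hF4 e heF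
    rw [hab] at he
    rcases Sym2.eq_iff.mp he with ⟨rfl, rfl⟩ | ⟨rfl, rfl⟩
    · rw [hcleq ha₀, hcleq hb₀]; exact hadj
    · rw [hcleq hb₀, hcleq ha₀]; exact hadj.symm
  have hTiE : ∀ (i : Fin k) (e), e ∈ (Ti i).edgeSet → ∀ a b : V, e = s(a, b) →
      a ∈ C i ∧ b ∈ C i := by
    intro i e he a b hab
    exact (hTi i).2.1 a b ((mem_edgeSet _).mp (hab ▸ he))
  have hTidisj : Pairwise (Function.onFun Disjoint fun i => (Ti i).edgeSet) := by
    intro i j hij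
    rw [Function.onFun, Set.disjoint_left]
    intro e h1 h2
    rcases e with ⟨a, b⟩
    have ha1 := (hTiE i _ h1 a b rfl).1
    have ha2 := (hTiE j _ h2 a b rfl).1
    exact hij (by rw [← hcleq ha1, hcleq ha2])
  have hdisjFU : Disjoint F (⋃ i, (Ti i).edgeSet) := by
    rw [Set.disjoint_left]
    intro e heF heU
    obtain ⟨j, hej⟩ := Set.mem_iUnion.mp heU
    rcases e with ⟨a, b⟩
    have h1 := (hFcl _ heF a b rfl).ne
    have h2 := hTiE j _ hej a b rfl
    exact h1 (by rw [hcleq h2.1, hcleq h2.2])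
  have hindEq : ∀ i, (SimpleGraph.fromEdgeSet S).induce (C i) = (Ti i).induce (C i) := by
    intro i
    ext u v
    show (SimpleGraph.fromEdgeSet S).Adj ↑u ↑v ↔ (Ti i).Adj ↑u ↑v
    rw [fromEdgeSet_adj]
    constructor
    · rintro ⟨hmem, hne'⟩
      rcases hmem with hF' | hU
      · have hne2 := (hFcl _ hF' ↑u ↑v rfl).ne
        exact absurd (by rw [hcleq u.2, hcleq v.2]) hne2
      · obtain ⟨j, hej⟩ := Set.mem_iUnion.mp hU
        have hmem2 := hTiE j _ hej ↑u ↑v rfl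
        have hji : j = i := by rw [← hcleq hmem2.1, hcleq u.2]
        subst hji
        exact (mem_edgeSet _).mp hej
    · intro hadj
      exact ⟨Or.inr (Set.mem_iUnion.mpr ⟨i, (mem_edgeSet _).mpr hadj⟩), hadj.ne⟩
  have hindConn : ∀ i, ((SimpleGraph.fromEdgeSet S).induce (C i)).Connected := by
    intro i
    rw [hindEq i]
    exact (hTi i).2.2.isConnected
  have reach1 : ∀ (i : Fin k) (u v : V), u ∈ C i → v ∈ C i →
      (SimpleGraph.fromEdgeSet S).Reachable u v := by
    intro i u v hu hv
    have hr := (hindConn i).preconnected ⟨u, hu⟩ ⟨v, hv⟩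
    exact hr.map (Embedding.induce (C i)).toHom
  have reach2 : ∀ {i j : Fin k} (p : T'.Walk i j) (u : V), u ∈ C i → ∀ v : V, v ∈ C j →
      (SimpleGraph.fromEdgeSet S).Reachable u v := by
    intro i j p
    induction p with
    | nil => intro u hu v hv; exact reach1 _ u v hu hv
    | @cons i m j hadj p ih =>
      intro u hu v hv
      obtain ⟨e, ⟨heF, a, ha, b, hb, he⟩, -⟩ := hF2 i m hadj
      subst he
      have hab : (SimpleGraph.fromEdgeSet S).Adj a b := by
        rw [fromEdgeSet_adj]
        exact ⟨Or.inl heF, ((mem_edgeSet _).mp (hF1 _ heF)).ne⟩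
      exact ((reach1 i u a hu ha).trans hab.reachable).trans (ih b hb v hv)
  have hTtconn : (SimpleGraph.fromEdgeSet S).Connected := by
    haveI : Nonempty V := hG.nonempty
    constructor
    intro u v
    refine (hT'tree.isConnected.preconnected (cl u) (cl v)).elim fun p => ?_
    exact reach2 p u (hclmem u) v (hclmem v)
  have hcardCi : ∀ i, (Ti i).edgeSet.ncard + 1 = (C i).ncard := by
    intro i
    haveI : Fintype ↥(C i) := (Set.toFinite _).fintype
    have h1 := tree_ncard (hTi i).2.2
    have h2 : Fintype.card ↥(C i) = (C i).ncard := by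
      rw [← Nat.card_eq_fintype_card, Nat.card_coe_set_eq]
    have h3 : (Ti i).edgeSet = Sym2.map Subtype.val '' ((Ti i).induce (C i)).edgeSet := by
      ext e
      constructor
      · intro he
        rcases e with ⟨a, b⟩
        have hmem := hTiE i _ he a b rfl
        refine ⟨s((⟨a, hmem.1⟩ : C i), (⟨b, hmem.2⟩ : C i)), ?_, ?_⟩
        · exact (mem_edgeSet _).mpr ((mem_edgeSet _).mp he)
        · rw [Sym2.map_pair_eq]
      · rintro ⟨f, hf, rfl⟩
        rcases f with ⟨u, v⟩
        rw [Sym2.map_pair_eq]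
        exact (mem_edgeSet _).mpr ((mem_edgeSet _).mp hf)
    rw [h3, Set.ncard_image_of_injective _ (Sym2.map.injective Subtype.val_injective), ← h2]
    exact h1
  have hFbij : Set.BijOn (Sym2.map cl) F T'.edgeSet := by
    refine ⟨?_, ?_, ?_⟩
    · intro e he
      rcases e with ⟨a, b⟩
      rw [Sym2.map_pair_eq]
      exact (mem_edgeSet _).mpr (hFcl _ he a b rfl)
    · intro e1 h1 e2 h2 heq
      obtain ⟨i, j, hadj, a, ha, b, hb, he1⟩ := hF4 e1 h1
      obtain ⟨e₀, he₀, huniq⟩ := hF2 i j hadj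
      have hmap1 : Sym2.map cl e1 = s(i, j) := by
        rw [he1, Sym2.map_pair_eq, hcleq ha, hcleq hb]
      have c2 : Crosses e2 (C i) (C j) := by
        rcases e2 with ⟨a2, b2⟩
        rw [Sym2.map_pair_eq, hmap1] at heq
        rcases Sym2.eq_iff.mp heq with ⟨hi, hj⟩ | ⟨hi, hj⟩
        · exact ⟨a2, by rw [hi]; exact hclmem a2, b2, by rw [hj]; exact hclmem b2, rfl⟩
        · exact ⟨b2, by rw [hi]; exact hclmem b2, a2, by rw [hj]; exact hclmem a2,
            Sym2.eq_swap⟩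
      have c1 : e1 ∈ F ∧ Crosses e1 (C i) (C j) := ⟨h1, a, ha, b, hb, he1⟩
      exact (huniq e1 c1).trans (huniq e2 ⟨h2, c2⟩).symm
    · intro f hf
      rcases f with ⟨i, j⟩
      obtain ⟨e, ⟨heF, a, ha, b, hb, he⟩, -⟩ := hF2 i j ((mem_edgeSet _).mp hf)
      exact ⟨e, heF, by rw [he, Sym2.map_pair_eq, hcleq ha, hcleq hb]⟩
  have hT'card : T'.edgeSet.ncard + 1 = k := by
    have h := tree_ncard hT'tree
    rwa [Fintype.card_fin] at h
  have hFcard : F.ncard = T'.edgeSet.ncard := by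
    rw [← hFbij.image_eq, Set.ncard_image_of_injOn hFbij.injOn]
  have hVcard : Fintype.card V = ∑ i, (C i).ncard := by
    have h := ncard_iUnion_fin C (fun i => Set.toFinite _) hdisj
    rw [hcover] at h
    rw [← h, Set.ncard_univ, Nat.card_eq_fintype_card]
  have hScard : S.ncard + 1 = Fintype.card V := by
    rw [hS_def, Set.ncard_union_eq hdisjFU (Set.toFinite _) (Set.toFinite _),
      ncard_iUnion_fin _ (fun i => Set.toFinite _) hTidisj, hVcard]
    have hsum : ∑ i, (C i).ncard = (∑ i, (Ti i).edgeSet.ncard) + k := by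
      calc ∑ i, (C i).ncard = ∑ i : Fin k, ((Ti i).edgeSet.ncard + 1) :=
            Finset.sum_congr rfl fun i _ => (hcardCi i).symm
        _ = (∑ i, (Ti i).edgeSet.ncard) + ∑ _i : Fin k, 1 := Finset.sum_add_distrib
        _ = (∑ i, (Ti i).edgeSet.ncard) + k := by simp
    omega
  have hTree : (SimpleGraph.fromEdgeSet S).IsTree := by
    apply isTree_of_connected_of_ncard hTtconn
    rw [hTtE]
    omega
  refine ⟨⟨hTtle, hTree, hindConn⟩, ?_⟩
  intro T hT
  obtain ⟨hTle, hTtree, hTind⟩ := hT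
  let R : Fin k → SimpleGraph V := fun i =>
    { Adj := fun u v => T.Adj u v ∧ u ∈ C i ∧ v ∈ C i
      symm := ⟨fun u v h => ⟨h.1.symm, h.2.2, h.2.1⟩⟩
      loopless := ⟨fun u h => T.loopless.irrefl u h.1⟩ }
  have hRdisj : Pairwise (Function.onFun Disjoint fun i => (R i).edgeSet) := by
    intro i j hij
    rw [Function.onFun, Set.disjoint_left]
    intro e h1 h2
    rcases e with ⟨a, b⟩
    have ha1 := ((mem_edgeSet _).mp h1).2.1
    have ha2 := ((mem_edgeSet _).mp h2).2.1
    exact hij (by rw [← hcleq ha1, hcleq ha2])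
  have hRsub : (⋃ i, (R i).edgeSet) ⊆ T.edgeSet := by
    intro e he
    obtain ⟨i, hei⟩ := Set.mem_iUnion.mp he
    rcases e with ⟨a, b⟩
    exact (mem_edgeSet _).mpr ((mem_edgeSet _).mp hei).1
  have hsplit : wsum T w = (∑ᶠ e ∈ (T.edgeSet \ ⋃ i, (R i).edgeSet), w e)
      + ∑ i, ∑ᶠ e ∈ (R i).edgeSet, w e := by
    have hTE : T.edgeSet = (T.edgeSet \ ⋃ i, (R i).edgeSet) ∪ ⋃ i, (R i).edgeSet :=
      (Set.diff_union_of_subset hRsub).symm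
    rw [wsum]
    conv_lhs => rw [hTE]
    rw [finsum_mem_union Set.disjoint_sdiff_left (Set.toFinite _) (Set.toFinite _),
      finsum_mem_iUnion hRdisj (fun i => Set.toFinite _)]
    congr 1
    exact finsum_eq_sum_of_fintype _
  have hclusterBound : ∀ i, wsum (Ti i) w ≤ ∑ᶠ e ∈ (R i).edgeSet, w e := by
    intro i
    have heq : (R i).induce (C i) = T.induce (C i) := by
      ext u v
      show ((R i).Adj ↑u ↑v) ↔ T.Adj ↑u ↑v
      exact ⟨fun h => h.1, fun h => ⟨h, u.2, v.2⟩⟩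
    have htree : ((R i).induce (C i)).IsTree := by
      rw [heq]
      exact ⟨hTind i, isAcyclic_induce hTtree.IsAcyclic _⟩
    exact hTiMin i (R i) (by intro u v h; exact hTle h.1) (fun u v h => h.2) htree
  have hCTconn : (contractClusters T C).Connected := by
    have key : ∀ {a b : V}, T.Walk a b → (contractClusters T C).Reachable (cl a) (cl b) := by
      intro a b p
      induction p with
      | nil => exact Reachable.refl _
      | @cons x y z h' p ih =>
        by_cases hxy : cl x = cl y
        · rwa [hxy]
        · have hadj2 : (contractClusters T C).Adj (cl x) (cl y) :=
            ⟨hxy, x, hclmem x, y, hclmem y, h'⟩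
          exact hadj2.reachable.trans ih
    haveI : Nonempty V := hG.nonempty
    haveI : Nonempty (Fin k) := ⟨cl (Classical.arbitrary V)⟩
    constructor
    intro i j
    obtain ⟨u, hu⟩ := hCne i
    obtain ⟨v, hv⟩ := hCne j
    refine (hTtree.isConnected.preconnected u v).elim fun p => ?_
    have hr := key p
    rwa [hcleq hu, hcleq hv] at hr
  have hCTle : contractClusters T C ≤ contractClusters G C := by
    intro i j h
    obtain ⟨hij, u, hu, v, hv, huv⟩ := h
    exact ⟨hij, u, hu, v, hv, hTle huv⟩

  obtain ⟨H, hHle, hHtree⟩ := exists_spanning_tree (contractClusters T C).edgeSet.ncard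
    (contractClusters T C) le_rfl hCTconn
  have hmin := hT'min H (hHle.trans hCTle) hHtree
  have hex : ∀ f ∈ H.edgeSet, ∃ e, e ∈ (T.edgeSet \ ⋃ i, (R i).edgeSet) ∧
      Sym2.map cl e = f ∧ contractWeight G w C f ≤ w e := by
    intro f hf
    rcases f with ⟨i, j⟩
    obtain ⟨hij, u, hu, v, hv, huv⟩ := hHle ((mem_edgeSet _).mp hf)
    refine ⟨s(u, v), ⟨(mem_edgeSet _).mpr huv, ?_⟩, ?_, ?_⟩
    · intro hmem'
      obtain ⟨m, hm⟩ := Set.mem_iUnion.mp hmem'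
      have h2 := (mem_edgeSet _).mp hm
      refine hij ?_
      rw [← hcleq hu, ← hcleq hv, hcleq h2.2.1, hcleq h2.2.2]
    · rw [Sym2.map_pair_eq, hcleq hu, hcleq hv]
    · have hcw : contractWeight G w C s(i, j) = sInf {x | ∃ u' v', G.Adj u' v' ∧
          ((u' ∈ C i ∧ v' ∈ C j) ∨ (u' ∈ C j ∧ v' ∈ C i)) ∧ x = w s(u', v')} := rfl
      rw [hcw]
      refine csInf_le ⟨0, ?_⟩ ⟨u, v, hTle huv, Or.inl ⟨hu, hv⟩, rfl⟩
      rintro x ⟨u', v', -, -, rfl⟩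
      exact hw _
  have keyIneq : (∑ᶠ e ∈ H.edgeSet, contractWeight G w C e) ≤
      ∑ᶠ e ∈ (T.edgeSet \ ⋃ i, (R i).edgeSet), w e := by
    obtain ⟨v0⟩ := hG.nonempty
    have hex' : ∀ f : Sym2 (Fin k), ∃ e : Sym2 V, f ∈ H.edgeSet →
        e ∈ (T.edgeSet \ ⋃ i, (R i).edgeSet) ∧ Sym2.map cl e = f ∧
          contractWeight G w C f ≤ w e := by
      intro f
      by_cases hf : f ∈ H.edgeSet
      · obtain ⟨e, he⟩ := hex f hf
        exact ⟨e, fun _ => he⟩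
      · exact ⟨s(v0, v0), fun hf' => absurd hf' hf⟩
    choose φ hφ using hex'
    have hφ1 : ∀ f ∈ H.edgeSet, φ f ∈ (T.edgeSet \ ⋃ i, (R i).edgeSet) :=
      fun f hf => (hφ f hf).1
    have hφ2 : ∀ f ∈ H.edgeSet, Sym2.map cl (φ f) = f := fun f hf => (hφ f hf).2.1
    have hφ3 : ∀ f ∈ H.edgeSet, contractWeight G w C f ≤ w (φ f) :=
      fun f hf => (hφ f hf).2.2
    have hfinH : H.edgeSet.Finite := Set.toFinite _
    have hfinI : (T.edgeSet \ ⋃ i, (R i).edgeSet).Finite := Set.toFinite _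
    rw [finsum_mem_eq_finite_toFinset_sum _ hfinH, finsum_mem_eq_finite_toFinset_sum _ hfinI]
    have step1 : ∑ f ∈ hfinH.toFinset, contractWeight G w C f ≤
        ∑ f ∈ hfinH.toFinset, w (φ f) :=
      Finset.sum_le_sum fun f hf => hφ3 f (hfinH.mem_toFinset.mp hf)
    have step2 : ∑ f ∈ hfinH.toFinset, w (φ f) = ∑ e ∈ hfinH.toFinset.image φ, w e :=
      (Finset.sum_image fun x hx y hy hxy => by
        rw [← hφ2 x (hfinH.mem_toFinset.mp hx), ← hφ2 y (hfinH.mem_toFinset.mp hy), hxy]).symm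
    have step3 : ∑ e ∈ hfinH.toFinset.image φ, w e ≤ ∑ e ∈ hfinI.toFinset, w e := by
      refine Finset.sum_le_sum_of_subset_of_nonneg ?_ fun e _ _ => hw e
      intro e he
      obtain ⟨f, hf, rfl⟩ := Finset.mem_image.mp he
      exact hfinI.mem_toFinset.mpr (hφ1 f (hfinH.mem_toFinset.mp hf))
    linarith
  have hweights : ∀ e ∈ F, w e = contractWeight G w C (Sym2.map cl e) := by
    intro e heF
    rcases e with ⟨a, b⟩
    have hadj' := hFcl _ heF a b rfl
    have hcross : Crosses s(a, b) (C (cl a)) (C (cl b)) := ⟨a, hclmem a, b, hclmem b, rfl⟩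
    have hlst := (hF3 _ heF (cl a) (cl b) hadj'.ne hcross).2
    have hseteq : {x | ∃ e' ∈ G.edgeSet, Crosses e' (C (cl a)) (C (cl b)) ∧ x = w e'} =
        {x | ∃ u v, G.Adj u v ∧ ((u ∈ C (cl a) ∧ v ∈ C (cl b)) ∨
          (u ∈ C (cl b) ∧ v ∈ C (cl a))) ∧ x = w s(u, v)} := by
      ext x
      constructor
      · rintro ⟨e', he', ⟨u, hu, v, hv, rfl⟩, rfl⟩
        exact ⟨u, v, (mem_edgeSet _).mp he', Or.inl ⟨hu, hv⟩, rfl⟩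
      · rintro ⟨u, v, hadj'', hor, rfl⟩
        rcases hor with ⟨hu, hv⟩ | ⟨hu, hv⟩
        · exact ⟨s(u, v), (mem_edgeSet _).mpr hadj'', ⟨u, hu, v, hv, rfl⟩, rfl⟩
        · exact ⟨s(u, v), (mem_edgeSet _).mpr hadj'', ⟨v, hv, u, hu, Sym2.eq_swap⟩, rfl⟩
    rw [hseteq] at hlst
    have hcw : contractWeight G w C s(cl a, cl b) =
        sInf {x | ∃ u v, G.Adj u v ∧ ((u ∈ C (cl a) ∧ v ∈ C (cl b)) ∨
          (u ∈ C (cl b) ∧ v ∈ C (cl a))) ∧ x = w s(u, v)} := rfl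
    rw [Sym2.map_pair_eq, hcw]
    exact hlst.csInf_eq.symm
  have hFT' : (∑ᶠ e ∈ F, w e) = ∑ᶠ e ∈ T'.edgeSet, contractWeight G w C e :=
    finsum_mem_eq_of_bijOn _ hFbij hweights
  have hTtw : wsum (SimpleGraph.fromEdgeSet S) w = (∑ᶠ e ∈ F, w e) + ∑ i, wsum (Ti i) w := by
    rw [wsum, hTtE, hS_def,
      finsum_mem_union hdisjFU (Set.toFinite _) (Set.toFinite _),
      finsum_mem_iUnion hTidisj (fun i => Set.toFinite _)]
    congr 1
    rw [finsum_eq_sum_of_fintype]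
    rfl
  have hsum2 : ∑ i, wsum (Ti i) w ≤ ∑ i : Fin k, ∑ᶠ e ∈ (R i).edgeSet, w e :=
    Finset.sum_le_sum fun i _ => hclusterBound i
  calc wsum (SimpleGraph.fromEdgeSet S) w
      = (∑ᶠ e ∈ F, w e) + ∑ i, wsum (Ti i) w := hTtw
    _ = (∑ᶠ e ∈ T'.edgeSet, contractWeight G w C e) + ∑ i, wsum (Ti i) w := by rw [hFT']
    _ ≤ (∑ᶠ e ∈ H.edgeSet, contractWeight G w C e) + ∑ i, wsum (Ti i) w := by
        have := hmin; linarith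
    _ ≤ (∑ᶠ e ∈ (T.edgeSet \ ⋃ i, (R i).edgeSet), w e)
          + ∑ i : Fin k, ∑ᶠ e ∈ (R i).edgeSet, w e := by linarith [keyIneq, hsum2]
    _ = wsum T w := hsplit.symm
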